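/- If two inverse sequences of abelian groups are pro-isomorphic, then their derived limits lim¹ are isomorphic as abelian groups. -/

import Mathlib

universe u

/-- The composite bonding homomorphism `A (i + k) →+ A i` of an inverse sequence of abelian
groups `(A, lam)` (where `lam i : A (i+1) →+ A i`), written in "offset" form. -/
def bondAux (A : ℕ → Type u) [∀ i, AddCommGroup (A i)] (lam : ∀ i, A (i + 1) →+ A i) (i : ℕ) :
    ∀ k, A (i + k) →+ A i
  | 0 => AddMonoidHom.id (A i)
  | k + 1 => (bondAux A lam i k).comp (lam (i + k))

/-- The composite bonding homomorphism `λ_{i,j} : A j →+ A i` for `i ≤ j`. -/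
def bond (A : ℕ → Type u) [∀ i, AddCommGroup (A i)] (lam : ∀ i, A (i + 1) →+ A i)
    (i j : ℕ) (h : i ≤ j) : A j →+ A i :=
  (Nat.add_sub_cancel' h) ▸ bondAux A lam i (j - i)

/-- Two inverse sequences of abelian groups `(A, lam)` and `(B, mu)` are pro-isomorphic if
there are strictly increasing index sequences `ii`, `jj` and homomorphisms
`up k : B (jj k) →+ A (ii k)`, `dn k : A (ii (k+1)) →+ B (jj k)` such that `up k ∘ dn k` and
`dn k ∘ up (k+1)` are the corresponding composite bonding homomorphisms. -/
def IsProIso (A : ℕ → Type u) [∀ i, AddCommGroup (A i)] (lam : ∀ i, A (i + 1) →+ A i)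
    (B : ℕ → Type u) [∀ j, AddCommGroup (B j)] (mu : ∀ j, B (j + 1) →+ B j) : Prop :=
  ∃ (ii jj : ℕ → ℕ) (hii : StrictMono ii) (hjj : StrictMono jj)
    (up : ∀ k, B (jj k) →+ A (ii k)) (dn : ∀ k, A (ii (k + 1)) →+ B (jj k)),
    (∀ k, (up k).comp (dn k) = bond A lam (ii k) (ii (k + 1)) (hii (Nat.lt_succ_self k)).le) ∧
    (∀ k, (dn k).comp (up (k + 1)) = bond B mu (jj k) (jj (k + 1)) (hjj (Nat.lt_succ_self k)).le)

/-- The homomorphism `(g_i) ↦ (g_i - λ_{i+1}(g_{i+1}))` on the product of an inverse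
sequence of abelian groups; `lim¹` is its cokernel. -/
def delta (A : ℕ → Type u) [∀ i, AddCommGroup (A i)] (lam : ∀ i, A (i + 1) →+ A i) :
    (∀ i, A i) →+ (∀ i, A i) :=
  AddMonoidHom.mk' (fun g i => g i - lam i (g (i + 1))) (by
    intro a b
    funext i
    simp only [Pi.add_apply, map_add]
    abel)

/-- The derived limit `lim¹` of an inverse sequence of abelian groups: the quotient of
`∏ A i` by the subgroup `{(g_i - λ_{i+1} g_{i+1}) : (g_i) ∈ ∏ A i}`. -/
def lim1 (A : ℕ → Type u) [∀ i, AddCommGroup (A i)] (lam : ∀ i, A (i + 1) →+ A i) :=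
  (∀ i, A i) ⧸ (delta A lam).range

instance (A : ℕ → Type u) [∀ i, AddCommGroup (A i)] (lam : ∀ i, A (i + 1) →+ A i) :
    AddCommGroup (lim1 A lam) :=
  QuotientAddGroup.Quotient.addCommGroup _

section AuxBond

variable {A : ℕ → Type u} [∀ i, AddCommGroup (A i)] (lam : ∀ i, A (i + 1) →+ A i)

lemma bond_add (i k : ℕ) (h : i ≤ i + k) : bond A lam i (i + k) h = bondAux A lam i k := by
  have h1 : HEq (bond A lam i (i + k) h) (bondAux A lam i (i + k - i)) := by
    unfold bond; exact eqRec_heq_iff.mpr HEq.rfl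
  rw [Nat.add_sub_cancel_left] at h1
  exact eq_of_heq h1

lemma bond_self (i : ℕ) (h : i ≤ i) : bond A lam i i h = AddMonoidHom.id (A i) :=
  bond_add lam i 0 h

lemma bond_succ {i j : ℕ} (h : i ≤ j) (h' : i ≤ j + 1) :
    bond A lam i (j + 1) h' = (bond A lam i j h).comp (lam j) := by
  obtain ⟨k, rfl⟩ := Nat.exists_eq_add_of_le h
  rw [bond_add lam i k h]
  exact bond_add lam i (k+1) h'

/-- Total version of `bond`, zero when `i > j`. -/
noncomputable def bondIf (i j : ℕ) : A j →+ A i :=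
  if h : i ≤ j then bond A lam i j h else 0

lemma bondIf_of_le {i j : ℕ} (h : i ≤ j) : bondIf lam i j = bond A lam i j h := dif_pos h

lemma bondIf_self (i : ℕ) : bondIf lam i i = AddMonoidHom.id (A i) := by
  rw [bondIf_of_le lam le_rfl, bond_self]

lemma bondIf_succ {i j : ℕ} (h : i ≤ j) :
    bondIf lam i (j + 1) = (bondIf lam i j).comp (lam j) := by
  rw [bondIf_of_le lam h, bondIf_of_le lam (h.trans (Nat.le_succ j)), bond_succ lam h]

lemma bondIf_comp {i j : ℕ} (h1 : i ≤ j) :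
    ∀ k, j ≤ k → (bondIf lam i j).comp (bondIf lam j k) = bondIf lam i k := by
  intro k hk
  induction k, hk using Nat.le_induction with
  | base => rw [bondIf_self]; rfl
  | succ n hn ihn =>
      rw [bondIf_succ lam hn, bondIf_succ lam (h1.trans hn), ← ihn, AddMonoidHom.comp_assoc]

lemma bondIf_comp_apply {i j k : ℕ} (h1 : i ≤ j) (h2 : j ≤ k) (x : A k) :
    bondIf lam i j (bondIf lam j k x) = bondIf lam i k x := by
  rw [← bondIf_comp lam h1 k h2]; rfl

lemma delta_apply (g : ∀ i, A i) (i : ℕ) : delta A lam g i = g i - lam i (g (i + 1)) := rfl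

/-- Telescoping sum. -/
lemma tele (g : ∀ i, A i) {i : ℕ} : ∀ n, i ≤ n →
    ∑ m ∈ Finset.Ico i n, bondIf lam i m (delta A lam g m) = g i - bondIf lam i n (g n) := by
  intro n hn
  induction n, hn using Nat.le_induction with
  | base => simp [bondIf_self]
  | succ n hn ihn =>
      rw [Finset.sum_Ico_succ_top hn, ihn, delta_apply, map_sub, bondIf_succ lam hn]
      simp only [AddMonoidHom.comp_apply]
      abel

end AuxBond

section Reindex

variable {A : ℕ → Type u} [∀ i, AddCommGroup (A i)] (lam : ∀ i, A (i + 1) →+ A i)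
variable (ii : ℕ → ℕ) (hii : StrictMono ii)

/-- The collapse map `∏ A i → ∏ A (ii k)`. -/
noncomputable def phi : (∀ i, A i) →+ (∀ k, A (ii k)) :=
  AddMonoidHom.mk' (fun g k => ∑ m ∈ Finset.Ico (ii k) (ii (k + 1)), bondIf lam (ii k) m (g m))
    (by
      intro a b
      funext k
      simp [Finset.sum_add_distrib])

lemma phi_apply (g : ∀ i, A i) (k : ℕ) :
    phi lam ii g k = ∑ m ∈ Finset.Ico (ii k) (ii (k + 1)), bondIf lam (ii k) m (g m) := rfl

lemma phi_delta (g : ∀ i, A i) (k : ℕ) :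
    phi lam ii (delta A lam g) k
      = g (ii k) - bond A lam (ii k) (ii (k + 1)) (hii (Nat.lt_succ_self k)).le (g (ii (k + 1))) := by
  rw [phi_apply, tele lam g (ii (k+1)) (hii (Nat.lt_succ_self k)).le,
    bondIf_of_le lam (hii (Nat.lt_succ_self k)).le]

lemma phi_delta' (g : ∀ i, A i) :
    phi lam ii (delta A lam g)
      = delta (fun k => A (ii k))
          (fun k => bond A lam (ii k) (ii (k + 1)) (hii (Nat.lt_succ_self k)).le)
          (fun k => g (ii k)) := by
  funext k
  rw [phi_delta lam ii hii]
  rfl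

open Classical in
/-- A section of `phi`, supported on the image of `ii`. -/
noncomputable def sec (h' : ∀ k, A (ii k)) : ∀ i, A i := fun m =>
  if hm : ∃ k, ii k = m then hm.choose_spec ▸ h' hm.choose else 0

include hii in
lemma cast_apply {k k' : ℕ} (e : ii k' = ii k) (h' : ∀ k, A (ii k)) :
    (e ▸ h' k' : A (ii k)) = h' k := by
  have hk : k' = k := hii.injective e
  subst hk
  rfl

include hii in
lemma sec_apply (h' : ∀ k, A (ii k)) (k : ℕ) : sec ii h' (ii k) = h' k := by
  have hex : ∃ k', ii k' = ii k := ⟨k, rfl⟩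
  unfold sec
  rw [dif_pos hex]
  exact cast_apply ii hii hex.choose_spec h'

lemma sec_apply_ne (h' : ∀ k, A (ii k)) (m : ℕ) (hm : ¬ ∃ k, ii k = m) :
    sec ii h' m = 0 := by
  unfold sec
  rw [dif_neg hm]

include hii in
lemma phi_sec (h' : ∀ k, A (ii k)) : phi lam ii (sec ii h') = h' := by
  funext k
  rw [phi_apply]
  rw [Finset.sum_eq_single (ii k)]
  · rw [sec_apply ii hii h' k, bondIf_self]; rfl
  · intro m hmem hne
    rw [sec_apply_ne ii h' m ?_, map_zero]
    rintro ⟨k', rfl⟩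
    simp only [Finset.mem_Ico] at hmem
    exact hne (congrArg ii ((hii.le_iff_le.mp hmem.1).antisymm
      (Nat.lt_succ_iff.mp (hii.lt_iff_lt.mp hmem.2))).symm)
  · intro hnot
    exact absurd (Finset.mem_Ico.mpr ⟨le_rfl, hii (Nat.lt_succ_self k)⟩) hnot


/-- Candidate primitive for `g` given `h'` with `delta h' = phi g`. -/
noncomputable def Fm (g : ∀ i, A i) (h' : ∀ k, A (ii k)) (m k : ℕ) : A m :=
  (∑ n ∈ Finset.Ico m (ii k), bondIf lam m n (g n)) + bondIf lam m (ii k) (h' k)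

include hii in
lemma Fm_succ (g : ∀ i, A i) (h' : ∀ k, A (ii k))
    (hd : ∀ k, h' k - bond A lam (ii k) (ii (k + 1)) (hii (Nat.lt_succ_self k)).le (h' (k + 1))
      = phi lam ii g k)
    {m k : ℕ} (hmk : m ≤ ii k) :
    Fm lam ii g h' m k = Fm lam ii g h' m (k + 1) := by
  have hkk : ii k ≤ ii (k + 1) := (hii (Nat.lt_succ_self k)).le
  unfold Fm
  rw [← Finset.sum_Ico_consecutive (fun n => bondIf lam m n (g n)) hmk hkk]
  have h2 : ∑ n ∈ Finset.Ico (ii k) (ii (k + 1)), bondIf lam m n (g n)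
      = bondIf lam m (ii k) (phi lam ii g k) := by
    rw [phi_apply, map_sum]
    refine Finset.sum_congr rfl fun n hn => ?_
    rw [bondIf_comp_apply lam hmk (Finset.mem_Ico.mp hn).1]
  rw [h2, ← hd k, map_sub, ← bondIf_of_le lam hkk, bondIf_comp_apply lam hmk hkk]
  abel

include hii in
lemma Fm_const (g : ∀ i, A i) (h' : ∀ k, A (ii k))
    (hd : ∀ k, h' k - bond A lam (ii k) (ii (k + 1)) (hii (Nat.lt_succ_self k)).le (h' (k + 1))
      = phi lam ii g k)
    {m k : ℕ} (hmk : m ≤ ii k) : ∀ k', k ≤ k' → Fm lam ii g h' m k = Fm lam ii g h' m k' := by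
  intro k' hk'
  induction k', hk' using Nat.le_induction with
  | base => rfl
  | succ n hn ihn =>
      rw [ihn, Fm_succ lam ii hii g h' hd (hmk.trans (hii.monotone hn))]

lemma bondIf_succ_self (m : ℕ) : bondIf lam m (m + 1) = lam m := by
  rw [bondIf_succ lam le_rfl, bondIf_self]
  exact AddMonoidHom.id_comp _

include hii in
lemma delta_Fm (g : ∀ i, A i) (h' : ∀ k, A (ii k))
    (hd : ∀ k, h' k - bond A lam (ii k) (ii (k + 1)) (hii (Nat.lt_succ_self k)).le (h' (k + 1))
      = phi lam ii g k) :
    delta A lam (fun m => Fm lam ii g h' m m) = g := by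
  funext m
  rw [delta_apply]
  have h1 : Fm lam ii g h' m m = Fm lam ii g h' m (m + 1) :=
    Fm_const lam ii hii g h' hd hii.le_apply (m + 1) (Nat.le_succ m)
  rw [h1]
  have hm1 : m + 1 ≤ ii (m + 1) := hii.le_apply
  have hlt : m < ii (m + 1) := Nat.lt_of_lt_of_le (Nat.lt_succ_self m) hm1
  unfold Fm
  rw [map_add]
  have h3 : (lam m) (∑ n ∈ Finset.Ico (m + 1) (ii (m + 1)), bondIf lam (m + 1) n (g n))
      = ∑ n ∈ Finset.Ico (m + 1) (ii (m + 1)), bondIf lam m n (g n) := by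
    rw [map_sum]
    refine Finset.sum_congr rfl fun n hn => ?_
    rw [← bondIf_comp_apply lam (Nat.le_succ m) (Finset.mem_Ico.mp hn).1, bondIf_succ_self]
  have h4 : (lam m) (bondIf lam (m + 1) (ii (m + 1)) (h' (m + 1)))
      = bondIf lam m (ii (m + 1)) (h' (m + 1)) := by
    rw [← bondIf_comp_apply lam (Nat.le_succ m) hm1, bondIf_succ_self]
  rw [h3, h4, Finset.sum_eq_sum_Ico_succ_bot hlt (fun n => bondIf lam m n (g n))]
  rw [bondIf_self]
  show (AddMonoidHom.id (A m)) (g m) + _ + _ - _ = g m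
  rw [AddMonoidHom.id_apply]
  abel

include hii in
lemma reindex_equiv : Nonempty (lim1 A lam ≃+ lim1 (fun k => A (ii k))
    (fun k => bond A lam (ii k) (ii (k + 1)) (hii (Nat.lt_succ_self k)).le)) := by
  set lam' := fun k => bond A lam (ii k) (ii (k + 1)) (hii (Nat.lt_succ_self k)).le with hlam'
  have hle : (delta A lam).range ≤
      AddSubgroup.comap (phi lam ii) (delta (fun k => A (ii k)) lam').range := by
    rintro x ⟨g, rfl⟩
    exact ⟨fun k => g (ii k), (phi_delta' lam ii hii g).symm⟩
  set Φq := QuotientAddGroup.map (delta A lam).range (delta (fun k => A (ii k)) lam').range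
    (phi lam ii) hle with hΦq
  have hsurj : Function.Surjective Φq := by
    intro y
    obtain ⟨h', rfl⟩ := QuotientAddGroup.mk'_surjective _ y
    exact ⟨QuotientAddGroup.mk (sec ii h'), by
      rw [hΦq]
      show QuotientAddGroup.mk (phi lam ii (sec ii h')) = _
      rw [phi_sec lam ii hii h']
      rfl⟩
  have hinj : Function.Injective Φq := by
    rw [injective_iff_map_eq_zero]
    intro x hx
    obtain ⟨g, rfl⟩ := QuotientAddGroup.mk'_surjective _ x
    have hg : phi lam ii g ∈ (delta (fun k => A (ii k)) lam').range := by
      rw [← QuotientAddGroup.eq_zero_iff]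
      exact hx
    obtain ⟨h', hh'⟩ := hg
    have hd : ∀ k, h' k - bond A lam (ii k) (ii (k + 1)) (hii (Nat.lt_succ_self k)).le
        (h' (k + 1)) = phi lam ii g k := fun k => congrFun hh' k
    rw [show QuotientAddGroup.mk' (delta A lam).range g = QuotientAddGroup.mk g from rfl,
      QuotientAddGroup.eq_zero_iff]
    exact ⟨fun m => Fm lam ii g h' m m, delta_Fm lam ii hii g h' hd⟩
  exact ⟨AddEquiv.ofBijective Φq ⟨hinj, hsurj⟩⟩

end Reindex

section Interleave

variable {P Q : ℕ → Type u} [∀ k, AddCommGroup (P k)] [∀ k, AddCommGroup (Q k)]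
variable (u : ∀ k, Q k →+ P k) (d : ∀ k, P (k + 1) →+ Q k)

/-- The down map on products, with an index shift. -/
def Dmap : (∀ k, P k) →+ (∀ k, Q k) :=
  AddMonoidHom.mk' (fun g k => d k (g (k + 1))) (by
    intro a b; funext k; simp)

/-- The up map on products. -/
def Umap : (∀ k, Q k) →+ (∀ k, P k) :=
  AddMonoidHom.mk' (fun h k => u k (h k)) (by
    intro a b; funext k; simp)

lemma Dmap_delta (g : ∀ k, P k) :
    Dmap d (delta P (fun k => (u k).comp (d k)) g)
      = delta Q (fun k => (d k).comp (u (k + 1))) (Dmap d g) := by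
  funext k
  show d k (g (k + 1) - (u (k + 1)) (d (k + 1) (g (k + 2)))) = _
  rw [map_sub]
  rfl

lemma Umap_delta (h : ∀ k, Q k) :
    Umap u (delta Q (fun k => (d k).comp (u (k + 1))) h)
      = delta P (fun k => (u k).comp (d k)) (Umap u h) := by
  funext k
  show u k (h k - (d k) (u (k + 1) (h (k + 1)))) = _
  rw [map_sub]
  rfl

lemma sub_UD (g : ∀ k, P k) :
    g - Umap u (Dmap d g) = delta P (fun k => (u k).comp (d k)) g := rfl

lemma sub_DU (h : ∀ k, Q k) :
    h - Dmap d (Umap u h) = delta Q (fun k => (d k).comp (u (k + 1))) h := rfl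

lemma interleave_equiv :
    Nonempty (lim1 P (fun k => (u k).comp (d k)) ≃+ lim1 Q (fun k => (d k).comp (u (k + 1)))) := by
  set lamP := fun k => (u k).comp (d k) with hlamP
  set lamQ := fun k => (d k).comp (u (k + 1)) with hlamQ
  have hD : (delta P lamP).range ≤ AddSubgroup.comap (Dmap d) (delta Q lamQ).range := by
    rintro x ⟨g, rfl⟩
    exact ⟨Dmap d g, (Dmap_delta u d g).symm⟩
  have hU : (delta Q lamQ).range ≤ AddSubgroup.comap (Umap u) (delta P lamP).range := by
    rintro x ⟨h, rfl⟩
    exact ⟨Umap u h, (Umap_delta u d h).symm⟩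
  set Dq := QuotientAddGroup.map (delta P lamP).range (delta Q lamQ).range (Dmap d) hD
  set Uq := QuotientAddGroup.map (delta Q lamQ).range (delta P lamP).range (Umap u) hU
  refine ⟨{ toFun := Dq, invFun := Uq, left_inv := ?_, right_inv := ?_,
            map_add' := Dq.map_add }⟩
  · intro x
    obtain ⟨g, rfl⟩ := QuotientAddGroup.mk'_surjective _ x
    show QuotientAddGroup.mk (Umap u (Dmap d g)) = QuotientAddGroup.mk g
    rw [QuotientAddGroup.eq]
    exact ⟨g, by rw [← sub_UD u d g]; abel⟩
  · intro y
    obtain ⟨h, rfl⟩ := QuotientAddGroup.mk'_surjective _ y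
    show QuotientAddGroup.mk (Dmap d (Umap u h)) = QuotientAddGroup.mk h
    rw [QuotientAddGroup.eq]
    exact ⟨h, by rw [← sub_DU u d h]; abel⟩

end Interleave

/-- Pro-isomorphic inverse sequences of abelian groups have isomorphic derived limits. -/
theorem lim1_addEquiv_of_isProIso (A : ℕ → Type u) [∀ i, AddCommGroup (A i)]
    (lam : ∀ i, A (i + 1) →+ A i)
    (B : ℕ → Type u) [∀ j, AddCommGroup (B j)] (mu : ∀ j, B (j + 1) →+ B j)
    (h : IsProIso A lam B mu) :
    Nonempty (lim1 A lam ≃+ lim1 B mu) := by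
  obtain ⟨ii, jj, hii, hjj, up, dn, hud, hdu⟩ := h
  obtain ⟨e1⟩ := reindex_equiv lam ii hii
  obtain ⟨e3⟩ := reindex_equiv mu jj hjj
  have hA : (fun k => bond A lam (ii k) (ii (k + 1)) (hii (Nat.lt_succ_self k)).le)
      = fun k => (up k).comp (dn k) := funext fun k => (hud k).symm
  have hB : (fun k => bond B mu (jj k) (jj (k + 1)) (hjj (Nat.lt_succ_self k)).le)
      = fun k => (dn k).comp (up (k + 1)) := funext fun k => (hdu k).symm
  rw [hA] at e1
  rw [hB] at e3
  obtain ⟨e2⟩ := interleave_equiv up dn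
  exact ⟨(e1.trans e2).trans e3.symm⟩
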